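/- Let r ≤ n be natural numbers. Then in the formal power series ring ℤ[[a,b]] one has the identity (Σ_{m ≥ 0} Σ_{k=0}^{min(m,r)} C(r,k)·C(n−r+m−1, m−k)·a^m b^k) · (1−a)ⁿ = (1−a+ab)^r, where C denotes the binomial coefficient and, for m = 0 and r = n, the term C(n−r+m−1, m−k) = C(−1,0) is interpreted as 1 (equivalently, the subtraction n−r+m−1 is truncated at 0). (This is the statement that the bigraded Poincaré–Betti series of ⊕_m D^(m)(𝒜_{n,r}) for r ≤ n equals (1−a+ab)^r/(1−a)ⁿ, where a records the order m and b the polynomial degree of the C(r,k)·C(n−r+m−1,m−k) free basis elements of polynomial degree k.) -/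

import Mathlib

noncomputable section

/-- The formal power series `Σ_{m,k} C(r,k)·C(n−r+m−1, m−k)·a^m b^k` in
`ℤ[[a,b]]`, where `a = X 0` records the order and `b = X 1` the polynomial degree;
the coefficient of `a^m b^k` is `C(r,k)·C(n−r+m−1, m−k)` for `k ≤ m` (the
constraint `k ≤ r` being automatic since `C(r,k) = 0` otherwise), with the
truncated-subtraction convention `C(n−r+m−1, m−k) = C(0,0) = 1` when
`n − r + m − 1 < 0`. -/
def pbSeries (n r : ℕ) : MvPowerSeries (Fin 2) ℤ :=
  fun e => if e 1 ≤ e 0 then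
    ((r.choose (e 1)) * ((n - r + e 0 - 1).choose (e 0 - e 1)) : ℤ)
  else 0

private lemma coeff_pbSeries (n r : ℕ) (e : Fin 2 →₀ ℕ) :
    MvPowerSeries.coeff e (pbSeries n r) =
      if e 1 ≤ e 0 then
        ((r.choose (e 1)) * ((n - r + e 0 - 1).choose (e 0 - e 1)) : ℤ)
      else 0 :=
  rfl

/-- Key recurrence in `n`. -/
private lemma pb_mul_one_sub (n r : ℕ) (h : r ≤ n) :
    pbSeries (n + 1) r * (1 - MvPowerSeries.X 0) = pbSeries n r := by
  ext e
  rw [mul_sub, mul_one, map_sub, MvPowerSeries.X_def,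
    MvPowerSeries.coeff_mul_monomial, coeff_pbSeries, coeff_pbSeries]
  have happ0 : ((e - Finsupp.single 0 1 : Fin 2 →₀ ℕ)) 0 = e 0 - 1 := by
    simp [Finsupp.tsub_apply]
  have happ1 : ((e - Finsupp.single 0 1 : Fin 2 →₀ ℕ)) 1 = e 1 := by
    simp [Finsupp.tsub_apply, Finsupp.single_apply]
  simp only [Finsupp.single_le_iff, coeff_pbSeries, happ0, happ1, mul_one]
  clear happ0 happ1
  generalize e 0 = m
  generalize e 1 = k
  split_ifs with hkm hmm hkm' hmm2 hkm2
  · -- k ≤ m, 1 ≤ m, k ≤ m - 1 : Pascal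
    have hB1 : n + 1 - r + m - 1 = (n - r + m - 1) + 1 := by omega
    have hB2 : n + 1 - r + (m - 1) - 1 = n - r + m - 1 := by omega
    have hB3 : m - k = ((m - 1) - k) + 1 := by omega
    rw [hB1, hB2, hB3, Nat.choose_succ_succ']
    rw [show (m - 1) - k + 1 = m - k from by omega]
    push_cast
    ring
  · -- k ≤ m, 1 ≤ m, ¬ k ≤ m - 1 : k = m
    obtain rfl : k = m := by omega
    rw [Nat.sub_self]
    simp
  · -- k ≤ m, ¬ 1 ≤ m, k ≤ m - 1 : m = 0, k = 0
    obtain rfl : m = 0 := by omega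
    obtain rfl : k = 0 := by omega
    simp
  · exact absurd (by omega : k ≤ m) hkm
  · ring
  · ring

/-- Key recurrence in `r`. -/
private lemma pb_succ_succ (n r : ℕ) (h : r ≤ n) :
    pbSeries (n + 1) (r + 1) =
      pbSeries n r + MvPowerSeries.X 0 * MvPowerSeries.X 1 * pbSeries (n + 1) r := by
  ext e
  rw [map_add, MvPowerSeries.X_def (R := ℤ) 0, MvPowerSeries.X_def (R := ℤ) 1,
    MvPowerSeries.monomial_mul_monomial, MvPowerSeries.coeff_monomial_mul,
    coeff_pbSeries, coeff_pbSeries]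
  have hcond : Finsupp.single (0 : Fin 2) 1 + Finsupp.single 1 1 ≤ e ↔
      1 ≤ e 0 ∧ 1 ≤ e 1 := by
    rw [Finsupp.le_def]
    constructor
    · intro hle
      have h0 := hle 0
      have h1 := hle 1
      simp [Finsupp.add_apply, Finsupp.single_apply] at h0 h1
      exact ⟨h0, h1⟩
    · rintro ⟨h0, h1⟩ i
      fin_cases i <;> simp [Finsupp.add_apply, Finsupp.single_apply, h0, h1]
  have happ0 : ((e - (Finsupp.single (0 : Fin 2) 1 + Finsupp.single 1 1) : Fin 2 →₀ ℕ)) 0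
      = e 0 - 1 := by
    simp [Finsupp.tsub_apply, Finsupp.add_apply, Finsupp.single_apply]
  have happ1 : ((e - (Finsupp.single (0 : Fin 2) 1 + Finsupp.single 1 1) : Fin 2 →₀ ℕ)) 1
      = e 1 - 1 := by
    simp [Finsupp.tsub_apply, Finsupp.add_apply, Finsupp.single_apply]
  simp only [hcond, coeff_pbSeries, happ0, happ1, one_mul]
  clear happ0 happ1 hcond
  generalize e 0 = m
  generalize e 1 = k
  split_ifs with hkm hand hk' hand2 hk2
  · -- k ≤ m, 1 ≤ m ∧ 1 ≤ k, k - 1 ≤ m - 1 : Pascal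
    obtain ⟨j, rfl⟩ : ∃ j, k = j + 1 := ⟨k - 1, by omega⟩
    have hA1 : n + 1 - (r + 1) + m - 1 = n - r + m - 1 := by omega
    have hA2 : n + 1 - r + (m - 1) - 1 = n - r + m - 1 := by omega
    have hA3 : (m - 1) - (j + 1 - 1) = m - (j + 1) := by omega
    rw [hA1, hA2, hA3, show j + 1 - 1 = j from rfl, Nat.choose_succ_succ']
    push_cast
    ring
  · exact absurd (by omega : k - 1 ≤ m - 1) hk'
  · -- k ≤ m, ¬(1 ≤ m ∧ 1 ≤ k) : k = 0
    obtain rfl : k = 0 := by omega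
    rw [show n + 1 - (r + 1) + m - 1 = n - r + m - 1 from by omega]
    simp
  · exact absurd (show k ≤ m by omega) hkm
  · ring
  · ring

private lemma pb_base (n : ℕ) :
    pbSeries n 0 * (1 - MvPowerSeries.X 0) ^ n = 1 := by
  induction n with
  | zero =>
      rw [pow_zero, mul_one]
      ext e
      rw [coeff_pbSeries, MvPowerSeries.coeff_one]
      by_cases he : e = 0
      · subst he
        simp
      · have : ¬(e 0 = 0 ∧ e 1 = 0) := by
          intro ⟨h0, h1⟩
          apply he
          ext i
          fin_cases i <;> simpa
        rw [if_neg he]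
        by_cases hle : e 1 ≤ e 0
        · rw [if_pos hle]
          by_cases hk : e 1 = 0
          · have hm : 1 ≤ e 0 := by omega
            rw [hk]
            have : (0 - 0 + e 0 - 1).choose (e 0 - 0) = 0 :=
              Nat.choose_eq_zero_of_lt (by omega)
            rw [this]
            simp
          · rw [Nat.choose_eq_zero_of_lt (by omega)]
            simp
        · rw [if_neg hle]
  | succ n ih =>
      calc pbSeries (n + 1) 0 * (1 - MvPowerSeries.X 0) ^ (n + 1)
          = (pbSeries (n + 1) 0 * (1 - MvPowerSeries.X 0)) *
              (1 - MvPowerSeries.X 0) ^ n := by ring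
        _ = pbSeries n 0 * (1 - MvPowerSeries.X 0) ^ n := by
              rw [pb_mul_one_sub n 0 (Nat.zero_le n)]
        _ = 1 := ih

/-- For `r ≤ n`, in `ℤ[[a,b]]` one has
`(Σ_{m≥0} Σ_{k=0}^{min(m,r)} C(r,k)·C(n−r+m−1,m−k)·a^m b^k)·(1−a)ⁿ = (1−a+ab)^r`. -/
theorem pbSeries_identity (n r : ℕ) (hrn : r ≤ n) :
    pbSeries n r * (1 - MvPowerSeries.X 0) ^ n =
      (1 - MvPowerSeries.X 0 + MvPowerSeries.X 0 * MvPowerSeries.X 1 :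
        MvPowerSeries (Fin 2) ℤ) ^ r := by
  induction r generalizing n with
  | zero => simpa using pb_base n
  | succ r ih =>
      obtain ⟨n, rfl⟩ : ∃ m, n = m + 1 := ⟨n - 1, by omega⟩
      have hr : r ≤ n := by omega
      have h1 := ih n hr
      have h2 := ih (n + 1) (by omega)
      calc pbSeries (n + 1) (r + 1) * (1 - MvPowerSeries.X 0) ^ (n + 1)
          = (pbSeries n r * (1 - MvPowerSeries.X 0) ^ n) * (1 - MvPowerSeries.X 0)
              + MvPowerSeries.X 0 * MvPowerSeries.X 1 *
                (pbSeries (n + 1) r * (1 - MvPowerSeries.X 0) ^ (n + 1)) := by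
            rw [pb_succ_succ n r hr]
            ring
        _ = (1 - MvPowerSeries.X 0 + MvPowerSeries.X 0 * MvPowerSeries.X 1) ^ r *
              (1 - MvPowerSeries.X 0)
              + MvPowerSeries.X 0 * MvPowerSeries.X 1 *
                (1 - MvPowerSeries.X 0 + MvPowerSeries.X 0 * MvPowerSeries.X 1) ^ r := by
            rw [h1, h2]
        _ = (1 - MvPowerSeries.X 0 + MvPowerSeries.X 0 * MvPowerSeries.X 1) ^ (r + 1) := by
            ring

end
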